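/- arXiv:1206.1146 — 3 statements merged into one kernel-verified Lean document; each statement's English description precedes it below -/
import Mathlib

section
/- Let p be an odd prime, k ≥ 1 an integer with d := gcd(k, p-1), u ∈ F_p, and L an integer with 1 ≤ L < √p/2. Then there exist sets A, B ⊆ F_p with |A| ≥ L and |B| = L, and an element a ∈ F_p^×, such that every value of F(x,y) = x^k(x^k + y + u) with x ∈ A, y ∈ B can be written as a⁻²·x'·y' with x', y' ∈ {1, ..., 2L} ⊆ F_p. -/
theorem stmt_11 (p : ℕ) [Fact p.Prime] (hp : Odd p) (k : ℕ) (hk : 1 ≤ k)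
    (d : ℕ) (hd : d = Nat.gcd k (p - 1)) (u : ZMod p)
    (L : ℕ) (hL : 1 ≤ L) (hLp : (L : ℝ) < Real.sqrt p / 2) :
    ∃ (A B : Finset (ZMod p)) (a : (ZMod p)ˣ),
      L ≤ A.card ∧ B.card = L ∧
      ∀ x ∈ A, ∀ y ∈ B, ∃ x' ∈ Finset.Icc 1 (2 * L), ∃ y' ∈ Finset.Icc 1 (2 * L),
        x ^ k * (x ^ k + y + u)
          = ((a⁻¹ : (ZMod p)ˣ) : ZMod p) ^ 2 * (x' : ZMod p) * (y' : ZMod p) := by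
  have hprime : p.Prime := Fact.out
  have hp2 : 2 ≤ p := hprime.two_le
  have hLp' : L < p := by
    have hp1 : (1:ℝ) ≤ p := by exact_mod_cast Nat.one_le_of_lt hp2
    have h1 : Real.sqrt p ≤ p := (Real.sqrt_le_left (by positivity)).2 (by nlinarith)
    have : (L : ℝ) < p := by nlinarith [hLp]
    exact_mod_cast this
  set C : Finset (ZMod p) := (Finset.Icc 1 L).image (Nat.cast) with hCdef
  have hCcard : C.card = L := by
    rw [hCdef, Finset.card_image_of_injOn, Nat.card_Icc]
    · omega
    · intro m hm n hn h
      simp only [Finset.coe_Icc, Set.mem_Icc] at hm hn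
      have hm' : m < p := lt_of_le_of_lt hm.2 hLp'
      have hn' : n < p := lt_of_le_of_lt hn.2 hLp'
      have := congrArg ZMod.val h
      rwa [ZMod.val_natCast_of_lt hm', ZMod.val_natCast_of_lt hn'] at this
  have hC0 : ∀ c ∈ C, c ≠ 0 := by
    intro c hc
    rw [hCdef, Finset.mem_image] at hc
    obtain ⟨n, hn, rfl⟩ := hc
    simp only [Finset.mem_Icc] at hn
    intro h
    rw [ZMod.natCast_eq_zero_iff] at h
    have := Nat.le_of_dvd (by omega) h
    omega
  classical
  let f : (ZMod p)ˣ → Finset (ZMod p)ˣ :=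
    fun a => Finset.univ.filter (fun x => ((a * x ^ k : (ZMod p)ˣ) : ZMod p) ∈ C)
  have hrow : ∀ x : (ZMod p)ˣ,
      (Finset.univ.filter (fun a : (ZMod p)ˣ => ((a * x ^ k : (ZMod p)ˣ) : ZMod p) ∈ C)).card = L := by
    intro x
    rw [← hCcard]
    apply Finset.card_bij (fun a _ => ((a * x ^ k : (ZMod p)ˣ) : ZMod p))
    · intro a ha
      simpa using (Finset.mem_filter.1 ha).2
    · intro a ha b hb h
      have : (a * x ^ k : (ZMod p)ˣ) = b * x ^ k := Units.ext h
      exact mul_right_cancel this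
    · intro c hc
      have : IsUnit c := isUnit_iff_ne_zero.2 (hC0 c hc)
      obtain ⟨cu, rfl⟩ := this
      refine ⟨cu * (x ^ k)⁻¹, ?_, ?_⟩
      · simp [Finset.mem_filter]
        simpa [mul_assoc] using hc
      · simp [mul_assoc]
  -- double counting
  have hsum : ∑ a : (ZMod p)ˣ, (f a).card = Fintype.card (ZMod p)ˣ * L := by
    simp only [f, Finset.card_filter]
    rw [Finset.sum_comm]
    have : ∀ x : (ZMod p)ˣ, (∑ a : (ZMod p)ˣ,
        if ((a * x ^ k : (ZMod p)ˣ) : ZMod p) ∈ C then 1 else 0) = L := by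
      intro x
      rw [← hrow x, Finset.card_filter]
    simp only [this]
    simp [Finset.sum_const, Finset.card_univ, mul_comm]
  have hex : ∃ a : (ZMod p)ˣ, L ≤ (f a).card := by
    by_contra h
    push_neg at h
    have hlt : ∑ a : (ZMod p)ˣ, (f a).card < ∑ _a : (ZMod p)ˣ, L :=
      Finset.sum_lt_sum_of_nonempty Finset.univ_nonempty (fun a _ => h a)
    rw [hsum, Finset.sum_const, Finset.card_univ, smul_eq_mul] at hlt
    omega
  obtain ⟨a, ha⟩ := hex
  refine ⟨(f a).image (Units.val),
    C.image (fun c => ((a⁻¹ : (ZMod p)ˣ) : ZMod p) * c - u), a, ?_, ?_, ?_⟩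
  · rw [Finset.card_image_of_injective _ Units.val_injective]
    exact ha
  · have hinj : Function.Injective (fun c : ZMod p => ((a⁻¹ : (ZMod p)ˣ) : ZMod p) * c - u) := by
      intro c1 c2 h
      simp only at h
      have h2 : ((a⁻¹ : (ZMod p)ˣ) : ZMod p) * c1 = ((a⁻¹ : (ZMod p)ˣ) : ZMod p) * c2 := by
        linear_combination h
      exact mul_left_cancel₀ (Units.ne_zero _) h2
    rw [Finset.card_image_of_injective _ hinj, hCcard]
  · intro x hx y hy
    rw [Finset.mem_image] at hx hy
    obtain ⟨xu, hxu, rfl⟩ := hx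
    obtain ⟨c, hc, rfl⟩ := hy
    have hxu' := (Finset.mem_filter.1 hxu).2
    rw [hCdef, Finset.mem_image] at hxu' hc
    obtain ⟨c1, hc1, hc1e⟩ := hxu'
    obtain ⟨c2, hc2, hc2e⟩ := hc
    simp only [Finset.mem_Icc] at hc1 hc2
    refine ⟨c1, ?_, c1 + c2, ?_, ?_⟩
    · simp only [Finset.mem_Icc]; omega
    · simp only [Finset.mem_Icc]; omega
    have hinv : ((a⁻¹ : (ZMod p)ˣ) : ZMod p) * (a : ZMod p) = 1 := by
      rw [← Units.val_mul, inv_mul_cancel, Units.val_one]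
    have hx1 : ((xu : ZMod p)) ^ k = ((a⁻¹ : (ZMod p)ˣ) : ZMod p) * (c1 : ZMod p) := by
      have h1 : (a : ZMod p) * (xu : ZMod p) ^ k = (c1 : ZMod p) := by
        rw [hc1e]; push_cast; ring
      calc ((xu : ZMod p)) ^ k
          = ((a⁻¹ : (ZMod p)ˣ) : ZMod p) * ((a : ZMod p) * (xu : ZMod p) ^ k) := by
            rw [← mul_assoc, hinv, one_mul]
        _ = ((a⁻¹ : (ZMod p)ˣ) : ZMod p) * (c1 : ZMod p) := by rw [h1]
    simp only [Units.val_inv_eq_inv_val] at hx1 ⊢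
    push_cast
    linear_combination ((xu : ZMod p) ^ k + ((a : ZMod p))⁻¹ * (c1 : ZMod p)
        + ((a : ZMod p))⁻¹ * c) * hx1
      - ((a : ZMod p))⁻¹ ^ 2 * (c1 : ZMod p) * hc2e
end

section
/- Let p be an odd prime, u ∈ F_p, L a positive integer with L < p/2, and f ∈ F_p[x] a polynomial of degree k ≥ 1. Assume the Weil bound |Σ_{x ∈ F_p} e(h·f(x)/p)| ≤ (k-1)√p for all h ∈ F_p, h ≠ 0. Then the number N of residues x ∈ F_p such that f(x) lies in the interval (u - L, u + L) ⊆ F_p satisfies N ≥ L - k√p. -/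
open Finset

variable {p : ℕ} [NeZero p]

noncomputable def ψ (p : ℕ) [NeZero p] : AddChar (ZMod p) ℂ := ZMod.stdAddChar

lemma aux_orth (z : ZMod p) : ∑ h : ZMod p, ψ p (h * z) = if z = 0 then (p:ℂ) else 0 := by
  have := AddChar.sum_mulShift z (ZMod.isPrimitive_stdAddChar p)
  simpa [ψ, ZMod.card] using this

lemma aux_abs (a : ZMod p) : ‖ψ p a‖ = 1 := by
  rw [ψ, ZMod.stdAddChar_apply]
  exact Circle.norm_coe _

lemma aux_conj (a : ZMod p) : ψ p (-a) = starRingEnd ℂ (ψ p a) := by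
  have h1 : ψ p a * ψ p (-a) = 1 := by
    rw [← AddChar.map_add_eq_mul, add_neg_cancel, AddChar.map_zero_eq_one]
  have h2 : ψ p a * starRingEnd ℂ (ψ p a) = 1 := by
    rw [Complex.mul_conj]
    norm_cast
    rw [← Complex.sq_norm, aux_abs]; norm_num
  have h3 : ψ p a ≠ 0 := by
    intro h; rw [h] at h2; simp at h2
  exact mul_left_cancel₀ h3 (h1.trans h2.symm)

lemma aux_cast_inj {L : ℕ} (hLp : L ≤ p) {j j' : ℕ} (hj : j ∈ range L) (hj' : j' ∈ range L) :
    ((j : ZMod p) = (j' : ZMod p)) ↔ j = j' := by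
  rw [mem_range] at hj hj'
  constructor
  · intro h
    have := congrArg ZMod.val h
    rwa [ZMod.val_cast_of_lt (lt_of_lt_of_le hj hLp),
      ZMod.val_cast_of_lt (lt_of_lt_of_le hj' hLp)] at this
  · intro h; rw [h]

lemma aux_parseval (L : ℕ) (hLp : L ≤ p) :
    ∑ h : ZMod p, (∑ j ∈ range L, ψ p (h * j)) *
      starRingEnd ℂ (∑ j' ∈ range L, ψ p (h * j')) = (p : ℂ) * L := by
  have key : ∀ h : ZMod p, (∑ j ∈ range L, ψ p (h * j)) *
      starRingEnd ℂ (∑ j' ∈ range L, ψ p (h * j')) =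
      ∑ j ∈ range L, ∑ j' ∈ range L, ψ p (h * ((j : ZMod p) - j')) := by
    intro h
    rw [map_sum, sum_mul_sum]
    refine sum_congr rfl fun j _ => sum_congr rfl fun j' _ => ?_
    rw [← aux_conj, ← AddChar.map_add_eq_mul]
    ring_nf
  simp_rw [key]
  rw [Finset.sum_comm]
  have : ∀ j ∈ range L, ∑ h : ZMod p, ∑ j' ∈ range L, ψ p (h * ((j:ZMod p) - j'))
      = (p : ℂ) := by
    intro j hj
    rw [Finset.sum_comm]
    have : ∀ j' ∈ range L, ∑ h : ZMod p, ψ p (h * ((j:ZMod p) - j')) =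
        if j' = j then (p:ℂ) else 0 := by
      intro j' hj'
      rw [aux_orth]
      by_cases hjj : j' = j
      · simp [hjj]
      · rw [if_neg hjj, if_neg]
        intro hc
        rw [sub_eq_zero] at hc
        exact hjj (((aux_cast_inj hLp hj hj').mp hc).symm)
    rw [Finset.sum_congr rfl this, Finset.sum_ite_eq' _ _ _]
    simp [hj]
  rw [Finset.sum_congr rfl this, Finset.sum_const, card_range]
  ring

lemma aux_expand (g : ZMod p → ZMod p) (u : ZMod p) (L : ℕ) :
    (p : ℂ) * (∑ x : ZMod p, ∑ j ∈ range L, ∑ j' ∈ range L,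
        if g x = u + (j : ZMod p) - j' then (1:ℂ) else 0)
    = ∑ h : ZMod p, (∑ x : ZMod p, ψ p (h * g x)) * starRingEnd ℂ (ψ p (h * u)) *
        (starRingEnd ℂ (∑ j ∈ range L, ψ p (h * j))) * (∑ j' ∈ range L, ψ p (h * j')) := by
  have hterm : ∀ h : ZMod p, (∑ x : ZMod p, ψ p (h * g x)) * starRingEnd ℂ (ψ p (h * u)) *
        (starRingEnd ℂ (∑ j ∈ range L, ψ p (h * j))) * (∑ j' ∈ range L, ψ p (h * j'))
      = ∑ x : ZMod p, ∑ j ∈ range L, ∑ j' ∈ range L, ψ p (h * (g x - u - j + j')) := by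
    intro h
    rw [map_sum]
    rw [show (∑ x : ZMod p, ψ p (h * g x)) * starRingEnd ℂ (ψ p (h * u)) *
        (∑ j ∈ range L, starRingEnd ℂ (ψ p (h * j))) * (∑ j' ∈ range L, ψ p (h * j'))
      = ((∑ x : ZMod p, ψ p (h * g x)) * starRingEnd ℂ (ψ p (h * u))) *
        ((∑ j ∈ range L, starRingEnd ℂ (ψ p (h * j))) * (∑ j' ∈ range L, ψ p (h * j')))
      from by ring]
    rw [Finset.sum_mul, Finset.sum_mul_sum, Finset.sum_mul_sum]
    simp_rw [Finset.mul_sum]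
    refine sum_congr rfl fun x _ => sum_congr rfl fun j _ => sum_congr rfl fun j' _ => ?_
    rw [← aux_conj, ← aux_conj, ← AddChar.map_add_eq_mul, ← AddChar.map_add_eq_mul,
      ← AddChar.map_add_eq_mul]
    congr 1
    ring
  rw [Finset.sum_congr rfl fun h _ => hterm h]
  have swap : ∑ h : ZMod p, ∑ x : ZMod p, ∑ j ∈ range L, ∑ j' ∈ range L,
        ψ p (h * (g x - u - ↑j + ↑j'))
      = ∑ x : ZMod p, ∑ j ∈ range L, ∑ j' ∈ range L, ∑ h : ZMod p,
        ψ p (h * (g x - u - ↑j + ↑j')) := by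
    rw [Finset.sum_comm]
    refine Finset.sum_congr rfl fun x _ => ?_
    rw [Finset.sum_comm]
    exact Finset.sum_congr rfl fun j _ => Finset.sum_comm
  rw [swap]
  simp_rw [aux_orth]
  rw [Finset.mul_sum]
  refine sum_congr rfl fun x _ => ?_
  rw [Finset.mul_sum]
  refine sum_congr rfl fun j _ => ?_
  rw [Finset.mul_sum]
  refine sum_congr rfl fun j' _ => ?_
  by_cases hgx : g x = u + (j:ZMod p) - j'
  · rw [if_pos hgx, if_pos (by rw [hgx]; ring), mul_one]
  · rw [if_neg hgx, if_neg, mul_zero]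
    intro hc
    apply hgx
    linear_combination hc

open Classical in
theorem stmt_14 (p : ℕ) [Fact p.Prime] (hp : Odd p) (u : ZMod p)
    (L : ℕ) (hL : 0 < L) (hLp : 2 * L < p)
    (f : Polynomial (ZMod p)) (k : ℕ) (hk : f.natDegree = k) (hk1 : 1 ≤ k)
    (e : ZMod p → ℂ)
    (he : e = fun t => Complex.exp (2 * Real.pi * Complex.I * (t.val : ℂ) / p))
    (hWeil : ∀ h : ZMod p, h ≠ 0 →
      ‖∑ x : ZMod p, e (h * f.eval x)‖ ≤ ((k : ℝ) - 1) * Real.sqrt p)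
    (N : ℕ)
    (hN : N = (Finset.univ.filter (fun x : ZMod p =>
      ∃ j : ℤ, |j| < (L : ℤ) ∧ f.eval x = u + (j : ZMod p))).card) :
    (L : ℝ) - k * Real.sqrt p ≤ N := by
  haveI : NeZero p := ⟨(Fact.out : p.Prime).ne_zero⟩
  have hLP : L ≤ p := by omega
  have hppos : (0:ℝ) < p := by
    exact_mod_cast (Fact.out : p.Prime).pos
  have hsq : (0:ℝ) ≤ Real.sqrt p := Real.sqrt_nonneg p
  -- e is the standard additive character
  have heψ : ∀ t, e t = ψ p t := by
    intro t
    rw [he, ψ, ZMod.stdAddChar_apply, ZMod.toCircle_apply]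
  -- the counting quantity T
  set Tn : ℕ := ∑ x : ZMod p, ∑ j ∈ range L, ∑ j' ∈ range L,
    (if f.eval x = u + (j:ZMod p) - j' then 1 else 0) with hTn
  -- upper bound : T ≤ L * N
  have hTNnat : Tn ≤ L * N := by
    have h0 : ∀ x ∈ Finset.univ, x ∉ (Finset.univ.filter (fun x : ZMod p =>
        ∃ j : ℤ, |j| < (L : ℤ) ∧ f.eval x = u + (j : ZMod p))) →
        (∑ j ∈ range L, ∑ j' ∈ range L,
          (if f.eval x = u + (j:ZMod p) - j' then 1 else 0)) = 0 := by
      intro x _ hx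
      simp only [Finset.mem_filter, Finset.mem_univ, true_and] at hx
      refine Finset.sum_eq_zero fun j hj => Finset.sum_eq_zero fun j' hj' => ?_
      rw [if_neg]
      intro hc
      refine hx ⟨(j : ℤ) - j', ?_, ?_⟩
      · rw [Finset.mem_range] at hj hj'
        rw [abs_sub_lt_iff]
        omega
      · push_cast
        rw [hc]
        ring
    have h1 : ∀ x : ZMod p, (∑ j ∈ range L, ∑ j' ∈ range L,
        (if f.eval x = u + (j:ZMod p) - j' then 1 else 0)) ≤ L := by
      intro x
      have hin : ∀ j ∈ range L, (∑ j' ∈ range L,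
          (if f.eval x = u + (j:ZMod p) - j' then 1 else 0)) ≤ 1 := by
        intro j hj
        rw [← Finset.card_filter]
        refine Finset.card_le_one.mpr ?_
        intro a ha b hb
        rw [Finset.mem_filter] at ha hb
        have hab : (a : ZMod p) = (b : ZMod p) := by
          have := ha.2.symm.trans hb.2
          linear_combination -this
        exact (aux_cast_inj hLP ha.1 hb.1).mp hab
      calc (∑ j ∈ range L, ∑ j' ∈ range L,
            (if f.eval x = u + (j:ZMod p) - j' then 1 else 0))
          ≤ ∑ _j ∈ range L, 1 := Finset.sum_le_sum hin
        _ = L := by simp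
    calc Tn = ∑ x ∈ (Finset.univ.filter (fun x : ZMod p =>
          ∃ j : ℤ, |j| < (L : ℤ) ∧ f.eval x = u + (j : ZMod p))),
          ∑ j ∈ range L, ∑ j' ∈ range L,
            (if f.eval x = u + (j:ZMod p) - j' then 1 else 0) := by
          rw [hTn]
          exact (Finset.sum_subset (Finset.filter_subset _ _) h0).symm
      _ ≤ ∑ _x ∈ (Finset.univ.filter (fun x : ZMod p =>
          ∃ j : ℤ, |j| < (L : ℤ) ∧ f.eval x = u + (j : ZMod p))), L :=
          Finset.sum_le_sum fun x _ => h1 x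
      _ = N * L := by rw [Finset.sum_const, hN, smul_eq_mul]
      _ = L * N := Nat.mul_comm _ _
  have hTN : (Tn : ℝ) ≤ (L : ℝ) * N := by exact_mod_cast hTNnat
  -- the expansion
  have hexp := aux_expand (p := p) (fun x => f.eval x) u L
  have hcast : (∑ x : ZMod p, ∑ j ∈ range L, ∑ j' ∈ range L,
      (if f.eval x = u + (j:ZMod p) - j' then (1:ℂ) else 0)) = (Tn:ℂ) := by
    rw [hTn]
    push_cast
    rfl
  rw [hcast] at hexp
  set J : ZMod p → ℂ := fun h => ∑ j ∈ range L, ψ p (h * j) with hJ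
  set S : ZMod p → ℂ := fun h => ∑ x : ZMod p, ψ p (h * f.eval x) with hS
  have hterm0 : S 0 * starRingEnd ℂ (ψ p (0 * u)) * starRingEnd ℂ (J 0) * J 0
      = (p : ℂ) * L * L := by
    have hS0 : S 0 = (p : ℂ) := by
      simp [hS, AddChar.map_zero_eq_one, ZMod.card]
    have hJ0 : J 0 = (L : ℂ) := by
      simp [hJ, AddChar.map_zero_eq_one]
    rw [hS0, hJ0, zero_mul, AddChar.map_zero_eq_one, map_one, Complex.conj_natCast]
    ring
  have hsplit : (p : ℂ) * Tn = (p : ℂ) * L * L +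
      ∑ h ∈ Finset.univ.erase (0 : ZMod p),
        S h * starRingEnd ℂ (ψ p (h * u)) * starRingEnd ℂ (J h) * J h := by
    rw [hexp, ← Finset.add_sum_erase _ _ (Finset.mem_univ (0 : ZMod p)), hterm0]
  -- Parseval, real form
  have hpars : ∑ h : ZMod p, (‖J h‖)^2 = (p : ℝ) * L := by
    have h1 := aux_parseval (p := p) L hLP
    simp_rw [Complex.mul_conj] at h1
    have h2 : ((∑ h : ZMod p, Complex.normSq (J h) : ℝ) : ℂ) = (((p : ℝ) * L : ℝ) : ℂ) := by
      push_cast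
      exact h1
    have h3 := Complex.ofReal_inj.mp h2
    simp_rw [Complex.sq_norm]
    exact h3
  -- bound the error term
  have hkpos : (0:ℝ) ≤ (k:ℝ) - 1 := by
    have : (1:ℝ) ≤ k := by exact_mod_cast hk1
    linarith
  have hRabs : ‖∑ h ∈ Finset.univ.erase (0 : ZMod p),
      S h * starRingEnd ℂ (ψ p (h * u)) * starRingEnd ℂ (J h) * J h‖
      ≤ ((k : ℝ) - 1) * Real.sqrt p * ((p : ℝ) * L) := by
    calc ‖∑ h ∈ Finset.univ.erase (0 : ZMod p),
        S h * starRingEnd ℂ (ψ p (h * u)) * starRingEnd ℂ (J h) * J h‖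
        ≤ ∑ h ∈ Finset.univ.erase (0 : ZMod p),
          ‖S h * starRingEnd ℂ (ψ p (h * u)) * starRingEnd ℂ (J h) * J h‖ :=
          norm_sum_le _ _
      _ ≤ ∑ h ∈ Finset.univ.erase (0 : ZMod p),
          ((k : ℝ) - 1) * Real.sqrt p * (‖J h‖)^2 := by
          refine Finset.sum_le_sum fun h hh => ?_
          rw [Finset.mem_erase] at hh
          have hSabs : ‖S h‖ ≤ ((k : ℝ) - 1) * Real.sqrt p := by
            have := hWeil h hh.1
            simp_rw [heψ] at this
            exact this
          rw [norm_mul, norm_mul, norm_mul, Complex.norm_conj, Complex.norm_conj, aux_abs, mul_one]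
          rw [sq]
          have hJnn : (0:ℝ) ≤ ‖J h‖ := norm_nonneg _
          calc ‖S h‖ * ‖J h‖ * ‖J h‖
              ≤ ((k : ℝ) - 1) * Real.sqrt p * ‖J h‖ * ‖J h‖ := by
                refine mul_le_mul_of_nonneg_right (mul_le_mul_of_nonneg_right hSabs hJnn) hJnn
            _ = ((k : ℝ) - 1) * Real.sqrt p * (‖J h‖ * ‖J h‖) := by ring
      _ ≤ ∑ h : ZMod p, ((k : ℝ) - 1) * Real.sqrt p * (‖J h‖)^2 := by
          refine Finset.sum_le_sum_of_subset_of_nonneg (Finset.erase_subset _ _) ?_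
          intro h _ _
          positivity
      _ = ((k : ℝ) - 1) * Real.sqrt p * ((p : ℝ) * L) := by
          rw [← Finset.mul_sum, hpars]
  -- convert to a real inequality
  have hreal : (p : ℝ) * L * L - ((k : ℝ) - 1) * Real.sqrt p * ((p : ℝ) * L)
      ≤ (p : ℝ) * Tn := by
    have hdiff : ((p : ℝ) * Tn - (p : ℝ) * L * L : ℝ) =
        Complex.re ((p : ℂ) * Tn - (p : ℂ) * L * L) := by
      push_cast
      simp
    have habs : |((p : ℝ) * Tn - (p : ℝ) * L * L : ℝ)|
        ≤ ((k : ℝ) - 1) * Real.sqrt p * ((p : ℝ) * L) := by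
      have h4 : ((p : ℂ) * Tn - (p : ℂ) * L * L) = ∑ h ∈ Finset.univ.erase (0 : ZMod p),
          S h * starRingEnd ℂ (ψ p (h * u)) * starRingEnd ℂ (J h) * J h := by
        rw [hsplit]; ring
      have h5 : ((p : ℝ) * Tn - (p : ℝ) * L * L : ℝ) =
          Complex.re ((p : ℂ) * Tn - (p : ℂ) * L * L) := hdiff
      rw [h5, h4]
      calc |Complex.re _| ≤ ‖_‖ := Complex.abs_re_le_norm _
        _ ≤ _ := hRabs
    have := abs_le.mp habs
    linarith [this.1]
  -- finish with arithmetic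
  have hstep : (L : ℝ) * L - ((k : ℝ) - 1) * Real.sqrt p * L ≤ (L : ℝ) * N := by
    have h6 : (p : ℝ) * ((L : ℝ) * L - ((k : ℝ) - 1) * Real.sqrt p * L)
        ≤ (p : ℝ) * ((L : ℝ) * N) := by
      calc (p : ℝ) * ((L : ℝ) * L - ((k : ℝ) - 1) * Real.sqrt p * L)
          = (p : ℝ) * L * L - ((k : ℝ) - 1) * Real.sqrt p * ((p : ℝ) * L) := by ring
        _ ≤ (p : ℝ) * Tn := hreal
        _ ≤ (p : ℝ) * ((L : ℝ) * N) := by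
            exact mul_le_mul_of_nonneg_left hTN (le_of_lt hppos)
    exact le_of_mul_le_mul_left h6 hppos
  have hLpos : (0:ℝ) < L := by exact_mod_cast hL
  have hfin : (L : ℝ) - ((k : ℝ) - 1) * Real.sqrt p ≤ N := by
    have h7 : (L : ℝ) * ((L : ℝ) - ((k : ℝ) - 1) * Real.sqrt p) ≤ (L : ℝ) * N := by
      calc (L : ℝ) * ((L : ℝ) - ((k : ℝ) - 1) * Real.sqrt p)
          = (L : ℝ) * L - ((k : ℝ) - 1) * Real.sqrt p * L := by ring
        _ ≤ (L : ℝ) * N := hstep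
    exact le_of_mul_le_mul_left h7 hLpos
  nlinarith [hsq]
end

section
/- Let p be a prime and A, B, C, D ⊆ F_p nonempty sets with |A|·|B|·|C|·|D| > p³. Then there exist a ∈ A, b ∈ B, c ∈ C, d ∈ D with a + b = c·d. -/
open Finset Complex
set_option maxHeartbeats 1000000


variable {p : ℕ} [Fact p.Prime]

lemma my_orth [NeZero p] (x : ZMod p) :
    ∑ r : ZMod p, ZMod.stdAddChar (r * x) = if x = 0 then (p : ℂ) else 0 := by
  classical
  simpa [ZMod.card] using AddChar.sum_mulShift x (ZMod.isPrimitive_stdAddChar p)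

lemma my_conj [NeZero p] (x : ZMod p) :
    (starRingEnd ℂ) (ZMod.stdAddChar x) = ZMod.stdAddChar (-x) := by
  have hp : 0 < ringChar (ZMod p) := by
    rw [ZMod.ringChar_zmod_n]; exact Nat.pos_of_ne_zero (NeZero.ne p)
  rw [AddChar.starComp_apply hp, AddChar.inv_apply]

lemma my_parseval [NeZero p] (u : ZMod p) (hu : u ≠ 0) (S : Finset (ZMod p)) :
    ∑ x : ZMod p, ‖∑ a ∈ S, ZMod.stdAddChar (x * (u * a))‖ ^ 2 = (p : ℝ) * S.card := by
  classical
  set ψ : AddChar (ZMod p) ℂ := ZMod.stdAddChar with hψ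
  set F : ZMod p → ℂ := fun x => ∑ a ∈ S, ψ (x * (u * a)) with hF
  have key : ∑ x : ZMod p, F x * (starRingEnd ℂ) (F x) = ((p : ℂ) * S.card) := by
    have h1 : ∀ x, F x * (starRingEnd ℂ) (F x)
        = ∑ a ∈ S, ∑ b ∈ S, ψ (x * (u * a - u * b)) := by
      intro x
      rw [hF, map_sum, Finset.sum_mul_sum]
      refine Finset.sum_congr rfl fun a _ => Finset.sum_congr rfl fun b _ => ?_
      rw [my_conj, ← AddChar.map_add_eq_mul]
      congr 1; ring
    simp_rw [h1]
    rw [Finset.sum_comm]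
    have h2 : ∀ a ∈ S, ∑ x : ZMod p, ∑ b ∈ S, ψ (x * (u * a - u * b)) = (p : ℂ) := by
      intro a ha
      rw [Finset.sum_comm]
      have h3 : ∀ b ∈ S, ∑ x : ZMod p, ψ (x * (u * a - u * b))
          = if a = b then (p : ℂ) else 0 := by
        intro b _
        rw [my_orth]
        congr 1
        rw [← mul_sub, mul_eq_zero, sub_eq_zero]
        simp [hu, eq_comm]
      rw [Finset.sum_congr rfl h3, Finset.sum_ite_eq S a fun _ => (p:ℂ), if_pos ha]
    rw [Finset.sum_congr rfl h2, Finset.sum_const, nsmul_eq_mul, mul_comm]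
  have h4 : ∀ x, F x * (starRingEnd ℂ) (F x) = ((‖F x‖ ^ 2 : ℝ) : ℂ) := by
    intro x
    rw [Complex.mul_conj, Complex.normSq_eq_norm_sq]
  simp_rw [h4] at key
  rw [← Complex.ofReal_sum] at key
  exact_mod_cast key

theorem stmt_17 (p : ℕ) [Fact p.Prime] (A B C D : Finset (ZMod p))
    (hA : A.Nonempty) (hB : B.Nonempty) (hC : C.Nonempty) (hD : D.Nonempty)
    (h : p ^ 3 < A.card * B.card * C.card * D.card) :
    ∃ a ∈ A, ∃ b ∈ B, ∃ c ∈ C, ∃ d ∈ D, a + b = c * d := by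
  classical
  haveI : NeZero p := ⟨(Fact.out : p.Prime).ne_zero⟩
  by_contra hcon
  push_neg at hcon
  set ψ : AddChar (ZMod p) ℂ := ZMod.stdAddChar with hψ
  set SA : ZMod p → ℂ := fun r => ∑ a ∈ A, ψ (r * a) with hSA
  set SB : ZMod p → ℂ := fun r => ∑ b ∈ B, ψ (r * b) with hSB
  set T : ZMod p → ℂ := fun r => ∑ c ∈ C, ∑ d ∈ D, ψ (-(r * (c * d))) with hT
  -- full sum vanishes
  have main : ∑ r : ZMod p, SA r * SB r * T r = 0 := by
    have expand : ∀ r : ZMod p, SA r * SB r * T r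
        = ∑ a ∈ A, ∑ b ∈ B, ∑ c ∈ C, ∑ d ∈ D, ψ (r * (a + b - c * d)) := by
      intro r
      rw [hSA, hSB, hT, Finset.sum_mul_sum, Finset.sum_mul]
      refine Finset.sum_congr rfl fun a _ => ?_
      rw [Finset.sum_mul]
      refine Finset.sum_congr rfl fun b _ => ?_
      rw [Finset.mul_sum]
      refine Finset.sum_congr rfl fun c _ => ?_
      rw [Finset.mul_sum]
      refine Finset.sum_congr rfl fun d _ => ?_
      rw [← AddChar.map_add_eq_mul, ← AddChar.map_add_eq_mul]
      congr 1; ring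
    simp_rw [expand]
    rw [Finset.sum_comm]
    refine Finset.sum_eq_zero fun a ha => ?_
    rw [Finset.sum_comm]
    refine Finset.sum_eq_zero fun b hb => ?_
    rw [Finset.sum_comm]
    refine Finset.sum_eq_zero fun c hc => ?_
    rw [Finset.sum_comm]
    refine Finset.sum_eq_zero fun d hd => ?_
    rw [my_orth]
    exact if_neg (sub_ne_zero.mpr (hcon a ha b hb c hc d hd))
  -- value at r = 0
  have at0 : SA 0 * SB 0 * T 0 = (A.card : ℂ) * B.card * ((C.card : ℂ) * D.card) := by
    rw [hSA, hSB, hT]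
    simp [Finset.sum_const, mul_comm]
  -- split off r = 0
  have split : (A.card : ℂ) * B.card * ((C.card : ℂ) * D.card)
      = -∑ r ∈ Finset.univ.erase (0 : ZMod p), SA r * SB r * T r := by
    have h0 := Finset.add_sum_erase Finset.univ (fun r => SA r * SB r * T r)
      (Finset.mem_univ (0 : ZMod p))
    rw [main] at h0
    rw [← at0]
    exact eq_neg_of_add_eq_zero_left h0
  set K : ℝ := (p : ℝ) * C.card * D.card with hKdef
  have hK : 0 ≤ K := by positivity
  -- bound on T
  have Tbound : ∀ r : ZMod p, r ≠ 0 → ‖T r‖ ≤ Real.sqrt K := by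
    intro r hr
    rw [Real.le_sqrt (norm_nonneg _) hK]
    set g : ZMod p → ℂ := fun c => ∑ d ∈ D, ψ (-(r * (c * d))) with hg
    have h3 : ∑ c : ZMod p, ‖g c‖ ^ 2 = (p : ℝ) * D.card := by
      have hpar := my_parseval (p := p) (-r) (neg_ne_zero.mpr hr) D
      have : ∀ c : ZMod p, g c = ∑ d ∈ D, ZMod.stdAddChar (c * (-r * d)) := by
        intro c
        refine Finset.sum_congr rfl fun d _ => ?_
        show ZMod.stdAddChar (-(r * (c * d))) = _
        congr 1; ring
      simp_rw [this]
      exact hpar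
    have h1 : (∑ c ∈ C, ‖g c‖) ^ 2 ≤ (C.card : ℝ) * ∑ c ∈ C, ‖g c‖ ^ 2 := by
      have hcs := Finset.sum_mul_sq_le_sq_mul_sq C (fun _ => (1 : ℝ)) (fun c => ‖g c‖)
      simpa using hcs
    have h2 : ∑ c ∈ C, ‖g c‖ ^ 2 ≤ ∑ c : ZMod p, ‖g c‖ ^ 2 :=
      Finset.sum_le_sum_of_subset_of_nonneg (Finset.subset_univ C)
        (fun _ _ _ => sq_nonneg _)
    have hTn : ‖T r‖ ≤ ∑ c ∈ C, ‖g c‖ := norm_sum_le _ _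
    have hTn2 : ‖T r‖ ^ 2 ≤ (∑ c ∈ C, ‖g c‖) ^ 2 :=
      pow_le_pow_left₀ (norm_nonneg _) hTn 2
    have hC1 : (1 : ℝ) ≤ C.card := by exact_mod_cast hC.card_pos
    nlinarith [h3, h1, h2, hTn2, hK]
  -- Parseval for SA and SB
  have PA : ∑ r : ZMod p, ‖SA r‖ ^ 2 = (p : ℝ) * A.card := by
    have := my_parseval (p := p) 1 one_ne_zero A
    simpa [one_mul] using this
  have PB : ∑ r : ZMod p, ‖SB r‖ ^ 2 = (p : ℝ) * B.card := by
    have := my_parseval (p := p) 1 one_ne_zero B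
    simpa [one_mul] using this
  have CS : (∑ r : ZMod p, ‖SA r‖ * ‖SB r‖) ^ 2 ≤ ((p : ℝ) * A.card) * ((p : ℝ) * B.card) := by
    rw [← PA, ← PB]
    exact Finset.sum_mul_sq_le_sq_mul_sq _ _ _
  set P : ℝ := (A.card : ℝ) * B.card * C.card * D.card with hPdef
  set S : ℝ := ∑ r : ZMod p, ‖SA r‖ * ‖SB r‖ with hSdef
  have hSnn : 0 ≤ S := Finset.sum_nonneg fun r _ => mul_nonneg (norm_nonneg _) (norm_nonneg _)
  have normE : P ≤ Real.sqrt K * S := by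
    have e1 : P = ‖(A.card : ℂ) * B.card * ((C.card : ℂ) * D.card)‖ := by
      rw [hPdef]
      simp [norm_mul]
      ring
    rw [e1, split, norm_neg]
    calc ‖∑ r ∈ Finset.univ.erase (0 : ZMod p), SA r * SB r * T r‖
        ≤ ∑ r ∈ Finset.univ.erase (0 : ZMod p), ‖SA r * SB r * T r‖ := norm_sum_le _ _
      _ ≤ ∑ r ∈ Finset.univ.erase (0 : ZMod p), ‖SA r‖ * ‖SB r‖ * Real.sqrt K := by
          refine Finset.sum_le_sum fun r hr => ?_
          rw [norm_mul, norm_mul]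
          exact mul_le_mul_of_nonneg_left (Tbound r (Finset.ne_of_mem_erase hr))
            (mul_nonneg (norm_nonneg _) (norm_nonneg _))
      _ ≤ ∑ r : ZMod p, ‖SA r‖ * ‖SB r‖ * Real.sqrt K := by
          refine Finset.sum_le_sum_of_subset_of_nonneg (Finset.subset_univ _) fun r _ _ => ?_
          positivity
      _ = Real.sqrt K * S := by rw [hSdef, ← Finset.sum_mul, mul_comm]
  have hP2 : P ^ 2 ≤ K * (((p : ℝ) * A.card) * ((p : ℝ) * B.card)) := by
    have hsq : P ^ 2 ≤ (Real.sqrt K * S) ^ 2 :=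
      pow_le_pow_left₀ (by positivity) normE 2
    have hks : (Real.sqrt K * S) ^ 2 = K * S ^ 2 := by
      rw [mul_pow, Real.sq_sqrt hK]
    rw [hks] at hsq
    exact le_trans hsq (mul_le_mul_of_nonneg_left CS hK)
  have hp3 : (p : ℝ) ^ 3 < P := by
    rw [hPdef]
    exact_mod_cast h
  have hKe : K * (((p : ℝ) * A.card) * ((p : ℝ) * B.card)) = (p : ℝ) ^ 3 * P := by
    rw [hKdef, hPdef]; ring
  rw [hKe] at hP2
  nlinarith [hp3, hP2, pow_nonneg (Nat.cast_nonneg p : (0:ℝ) ≤ p) 3]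
end
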